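/- If H is a proper S_0-invariant subgroup of E, then every element of H has the property that each generator a_i appearing in its reduced word appears at least twice. -/

import Mathlib

noncomputable section

abbrev Z2 : Type := Multiplicative (ZMod 2)
abbrev FP : Type := Monoid.CoprodI (fun _ : ℕ => Z2)

def gen (i : ℕ) : FP := Monoid.CoprodI.of (i := i) (Multiplicative.ofAdd (1 : ZMod 2))

def par : FP →* Z2 := Monoid.CoprodI.lift (fun _ => MonoidHom.id Z2)

/-- The subgroup of even-length words. -/
def Ev : Subgroup FP := par.ker

/-- Endomorphism of `FP` identifying letters according to `f`. -/
def ident (f : ℕ → ℕ) : FP →* FP :=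
  Monoid.CoprodI.lift (fun i => (Monoid.CoprodI.of (M := fun _ : ℕ => Z2) (i := f i)))

/-- `f` moves only finitely many letters. -/
def FinSupp (f : ℕ → ℕ) : Prop := ∃ n, ∀ k ≥ n, f k = k

/-- S₀-invariance. -/
def S0Inv (H : Subgroup FP) : Prop :=
  (∀ f : ℕ → ℕ, FinSupp f → ∀ x ∈ H, ident f x ∈ H) ∧
  (∀ k : ℕ, ∀ x ∈ H, gen k * x * gen k ∈ H)

/-- Length of the reduced word of `x`. -/
def wlen (x : FP) : ℕ := (Monoid.CoprodI.Word.equiv x).toList.length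

/-- Number of occurrences of the letter `i` in the reduced word of `x`. -/
def occ (x : FP) (i : ℕ) : ℕ :=
  ((Monoid.CoprodI.Word.equiv x).toList.map Sigma.fst).count i

/- ### Auxiliary lemmas -/

lemma z2_eq (a : Z2) (h : a ≠ 1) : a = Multiplicative.ofAdd (1 : ZMod 2) := by
  revert h; exact (by decide : ∀ a : Z2, a ≠ 1 → a = Multiplicative.ofAdd (1 : ZMod 2)) a

lemma gen_sq (i : ℕ) : gen i * gen i = 1 := by
  rw [gen, ← MonoidHom.map_mul]
  have : (Multiplicative.ofAdd (1 : ZMod 2)) * Multiplicative.ofAdd (1 : ZMod 2) = 1 := by decide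
  rw [this, MonoidHom.map_one]

lemma gen_inv (i : ℕ) : (gen i)⁻¹ = gen i :=
  inv_eq_of_mul_eq_one_right (gen_sq i)

lemma gen_pow_even (i n : ℕ) (h : Even n) : gen i ^ n = 1 := by
  obtain ⟨k, rfl⟩ := h
  rw [← two_mul, pow_mul, pow_two, gen_sq, one_pow]

lemma gen_pow_odd (i n : ℕ) (h : Odd n) : gen i ^ n = gen i := by
  obtain ⟨k, rfl⟩ := h
  rw [pow_add, pow_one, gen_pow_even i (2 * k) ⟨k, two_mul k⟩, one_mul]

lemma x_eq_prod (x : FP) :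
    x = (((Monoid.CoprodI.Word.equiv x).toList.map Sigma.fst).map gen).prod := by
  conv_lhs => rw [← Monoid.CoprodI.Word.equiv.left_inv x]
  show Monoid.CoprodI.Word.prod _ = _
  unfold Monoid.CoprodI.Word.prod
  congr 1
  rw [List.map_map]
  apply List.map_congr_left
  intro l hl
  have := (Monoid.CoprodI.Word.equiv x).ne_one l hl
  simp only [Function.comp_apply, gen]
  rw [z2_eq l.snd this]

lemma ident_gen (f : ℕ → ℕ) (i : ℕ) : ident f (gen i) = gen (f i) := by
  simp [ident, gen, Monoid.CoprodI.lift_of]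

lemma par_gen (i : ℕ) : par (gen i) = Multiplicative.ofAdd (1 : ZMod 2) := by
  simp [par, gen, Monoid.CoprodI.lift_of]

lemma par_prodgen (L : List ℕ) :
    par ((L.map gen).prod) = Multiplicative.ofAdd ((L.length : ZMod 2)) := by
  induction L with
  | nil => simp
  | cons a t ih =>
      rw [List.map_cons, List.prod_cons, map_mul, par_gen, ih, List.length_cons,
        ← ofAdd_add]
      congr 1
      push_cast
      ring

lemma mem_Ev_iff (L : List ℕ) : (L.map gen).prod ∈ Ev ↔ Even L.length := by
  rw [Ev, MonoidHom.mem_ker, par_prodgen, ofAdd_eq_one,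
    ZMod.natCast_eq_zero_iff]
  exact ⟨fun ⟨c,hc⟩ => ⟨c, by omega⟩, fun ⟨c,hc⟩ => ⟨c, by omega⟩⟩

lemma prodgen_mem (H : Subgroup FP) (hp : ∀ j k : ℕ, gen j * gen k ∈ H) :
    ∀ L : List ℕ, Even L.length → (L.map gen).prod ∈ H
  | [], _ => by simp
  | [a], h => by simp at h
  | a :: b :: t, h => by
      have ht : Even t.length := by
        simp only [List.length_cons] at h
        rcases h with ⟨c, hc⟩
        exact ⟨c - 1, by omega⟩
      have := prodgen_mem H hp t ht
      simp only [List.map_cons, List.prod_cons, ← mul_assoc]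
      exact mul_mem (hp a b) this

lemma pairs_mem (H : Subgroup FP)
    (hH : ∀ f : ℕ → ℕ, FinSupp f → ∀ x ∈ H, ident f x ∈ H)
    (i m : ℕ) (him : i ≠ m) (hmem : gen i * gen m ∈ H) (j k : ℕ) :
    gen j * gen k ∈ H := by
  set g : ℕ → ℕ := fun n => if n = i then j else if n = m then k else n with hg
  have hfs : FinSupp g := by
    refine ⟨i + m + 1, fun n hn => ?_⟩
    simp only [hg]
    rw [if_neg (by omega), if_neg (by omega)]
  have := hH g hfs _ hmem
  rw [map_mul, ident_gen, ident_gen] at this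
  simp only [hg, if_pos rfl, if_neg (Ne.symm him)] at this
  exact this

/-- In a proper S₀-invariant subgroup of `Ev`, every letter occurring in the reduced
word of an element occurs at least twice. -/
theorem stmt4 (H : Subgroup FP) (hle : H ≤ Ev) (hproper : H ≠ Ev) (hinv : S0Inv H) :
    ∀ x ∈ H, ∀ i : ℕ, 1 ≤ occ x i → 2 ≤ occ x i := by
  by_contra hcon
  push_neg at hcon
  obtain ⟨x, hxH, i, h1, h2⟩ := hcon
  set L : List ℕ := ((Monoid.CoprodI.Word.equiv x).toList.map Sigma.fst) with hLdef
  have hcount : L.count i = 1 := by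
    have : occ x i = 1 := by omega
    exact this
  have hx : x = (L.map gen).prod := x_eq_prod x
  have hiL : i ∈ L := by
    rw [← List.count_pos_iff, hcount]; norm_num
  obtain ⟨u, v, huv⟩ := List.append_of_mem hiL
  have hcu : u.count i = 0 ∧ v.count i = 0 := by
    rw [huv] at hcount
    rw [List.count_append, List.count_cons] at hcount
    simp at hcount
    omega
  have hiu : i ∉ u := by rw [← List.count_eq_zero]; exact hcu.1
  have hiv : i ∉ v := by rw [← List.count_eq_zero]; exact hcu.2
  -- bound on letters
  set S := L.sum with hS
  have hbound : ∀ n ∈ L, n ≤ S := fun n hn =>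
    List.single_le_sum (fun _ _ => Nat.zero_le _) n hn
  set m := S + 1 with hm
  have him : i ≠ m := by have := hbound i hiL; omega
  -- the collapsing map
  set f : ℕ → ℕ := fun n => if n = i then i else if n ≤ S then m else n with hf
  have hfs : FinSupp f := by
    refine ⟨S + 1, fun n hn => ?_⟩
    have hni : n ≠ i := by have := hbound i hiL; omega
    simp only [hf]
    rw [if_neg hni, if_neg (by omega)]
  have hfL : ∀ n ∈ L, n ≠ i → f n = m := by
    intro n hn hni
    simp only [hf]
    rw [if_neg hni, if_pos (hbound n hn)]
  have hfi : f i = i := by simp [hf]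
  -- compute ident f x
  have hid : ident f x ∈ H := hinv.1 f hfs x hxH
  have hcompute : ident f x =
      gen m ^ u.length * (gen i * gen m ^ v.length) := by
    rw [hx, map_list_prod, List.map_map, huv]
    have hmapu : u.map (ident f ∘ gen) = List.replicate u.length (gen m) := by
      rw [← List.map_const']
      apply List.map_congr_left
      intro a ha
      have haL : a ∈ L := by rw [huv]; simp [ha]
      have hai : a ≠ i := fun h => hiu (h ▸ ha)
      simp only [Function.comp_apply, ident_gen, hfL a haL hai]
    have hmapv : v.map (ident f ∘ gen) = List.replicate v.length (gen m) := by
      rw [← List.map_const']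
      apply List.map_congr_left
      intro a ha
      have haL : a ∈ L := by rw [huv]; simp [ha]
      have hai : a ≠ i := fun h => hiv (h ▸ ha)
      simp only [Function.comp_apply, ident_gen, hfL a haL hai]
    rw [List.map_append, List.map_cons, List.prod_append, List.prod_cons,
      hmapu, hmapv, List.prod_replicate, List.prod_replicate,
      Function.comp_apply, ident_gen, hfi]
  -- parity
  have hxEv : x ∈ Ev := hle hxH
  have heven : Even L.length := by
    rw [hx] at hxEv
    exact (mem_Ev_iff L).1 hxEv
  have hlen : L.length = u.length + 1 + v.length := by
    rw [huv]; simp; omega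
  have hpar : Odd u.length ∨ Odd v.length := by
    rcases Nat.even_or_odd u.length with he | ho
    · right
      rcases heven with ⟨c, hc⟩
      rcases he with ⟨d, hd⟩
      rw [Nat.odd_iff]; omega
    · left; exact ho
  -- get gen i * gen m ∈ H
  have hkey : gen i * gen m ∈ H := by
    rcases hpar with hu | hv
    · -- u odd, v even
      have hvlen : Even v.length := by
        rcases heven with ⟨c, hc⟩
        rcases hu with ⟨d, hd⟩
        rw [Nat.even_iff]; omega
      rw [hcompute, gen_pow_odd _ _ hu, gen_pow_even _ _ hvlen, mul_one] at hid
      have : (gen m * gen i)⁻¹ ∈ H := inv_mem hid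
      rwa [mul_inv_rev, gen_inv, gen_inv] at this
    · -- v odd, u even
      have hulen : Even u.length := by
        rcases heven with ⟨c, hc⟩
        rcases hv with ⟨d, hd⟩
        rw [Nat.even_iff]; omega
      rwa [hcompute, gen_pow_odd _ _ hv, gen_pow_even _ _ hulen, one_mul] at hid
  -- all pairs are in H, hence Ev ≤ H
  have hpairs : ∀ j k : ℕ, gen j * gen k ∈ H := pairs_mem H hinv.1 i m him hkey
  have hEvle : Ev ≤ H := by
    intro y hy
    rw [x_eq_prod y]
    apply prodgen_mem H hpairs
    have := (mem_Ev_iff (((Monoid.CoprodI.Word.equiv y).toList.map Sigma.fst))).1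
      (by rw [← x_eq_prod y]; exact hy)
    simpa using this
  exact hproper (le_antisymm hle hEvle)

end
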